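/- Let R be an associative ring with unit. Then R is a left V-ring (i.e. every simple left R-module is injective) if and only if the only small left R-module is the zero module. -/
import Mathlib

universe u

/-- A left `R`-module `K` is a *small module* if there exist a left `R`-module `L` and an
injective `R`-linear map `f : K → L` whose image is a superfluous submodule of `L`. -/
def IsSmallModule (R : Type u) [Ring R] (K : Type u) [AddCommGroup K] [Module R K] : Prop :=
  ∃ (L : Type u) (_ : AddCommGroup L) (_ : Module R L) (f : K →ₗ[R] L),
    Function.Injective f ∧
      ∀ X : Submodule R L, LinearMap.range f ⊔ X = ⊤ → X = ⊤

/-- `R` is a left V-ring iff the only small left `R`-module is the zero module. -/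
theorem stmt_0 (R : Type u) [Ring R] :
    (∀ (M : Type u) [AddCommGroup M] [Module R M], IsSimpleModule R M → Module.Injective R M) ↔
      (∀ (K : Type u) [AddCommGroup K] [Module R K], IsSmallModule R K → Subsingleton K) := by
  constructor
  · rintro hV K _ _ ⟨L, _, _, f, hf, hsmall⟩
    by_contra hKs
    rw [not_subsingleton_iff_nontrivial] at hKs
    obtain ⟨x, hx⟩ := exists_ne (0 : K)
    set y : L := f x with hy
    have hy0 : y ≠ 0 := fun h => hx (hf (by simpa using h))
    set φ : R →ₗ[R] L := LinearMap.toSpanSingleton R L y with hφ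
    have hK0 : (LinearMap.ker φ : Ideal R) ≠ ⊤ := by
      intro h
      have : (1 : R) ∈ LinearMap.ker φ := h ▸ Submodule.mem_top
      simp [LinearMap.mem_ker, hφ, LinearMap.toSpanSingleton_apply] at this
      exact hy0 this
    obtain ⟨P, hPmax, hKP⟩ := Ideal.exists_le_maximal _ hK0
    haveI hSsimple : IsSimpleModule R (R ⧸ P) :=
      isSimpleModule_iff_isCoatom.mpr (Ideal.isMaximal_def.mp hPmax)
    haveI hSinj : Module.Injective R (R ⧸ P) := hV (R ⧸ P) hSsimple
    set N := LinearMap.range φ with hN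
    set iso : (R ⧸ LinearMap.ker φ) ≃ₗ[R] N := φ.quotKerEquivRange with hiso
    set q₀ : (R ⧸ LinearMap.ker φ) →ₗ[R] (R ⧸ P) :=
      Submodule.mapQ _ _ LinearMap.id hKP with hq₀
    set q : N →ₗ[R] (R ⧸ P) := q₀ ∘ₗ (iso.symm : N →ₗ[R] R ⧸ LinearMap.ker φ) with hq
    obtain ⟨g, hg⟩ := hSinj.out N.subtype N.injective_subtype q
    have hyN : y ∈ N := ⟨1, by simp [hφ, LinearMap.toSpanSingleton_apply]⟩
    have hgy : g y ≠ 0 := by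
      have h1 : iso (Submodule.Quotient.mk 1) = ⟨y, hyN⟩ := by
        apply Subtype.ext
        show φ 1 = y
        simp [hφ, LinearMap.toSpanSingleton_apply]
      have h2 : g y = q ⟨y, hyN⟩ := (hg ⟨y, hyN⟩)
      rw [h2, hq]
      simp only [LinearMap.comp_apply]
      rw [← h1, LinearEquiv.coe_coe, LinearEquiv.symm_apply_apply, hq₀,
        Submodule.mapQ_apply]
      intro h
      have : (1 : R) ∈ P := by
        simpa [Submodule.Quotient.mk_eq_zero] using h
      exact hPmax.ne_top (Ideal.eq_top_of_isUnit_mem _ this isUnit_one)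
    have hsup : LinearMap.range f ⊔ LinearMap.ker g = ⊤ := by
      have hmap : Submodule.map g (LinearMap.range f ⊔ LinearMap.ker g) = ⊤ := by
        rcases eq_bot_or_eq_top (Submodule.map g (LinearMap.range f ⊔ LinearMap.ker g)) with h | h
        · exfalso
          apply hgy
          have : g y ∈ Submodule.map g (LinearMap.range f ⊔ LinearMap.ker g) :=
            ⟨y, Submodule.mem_sup_left ⟨x, rfl⟩, rfl⟩
          rw [h] at this
          simpa using this
        · exact h
      have := congrArg (Submodule.comap g) hmap
      rw [Submodule.comap_map_eq, Submodule.comap_top, sup_assoc, sup_idem] at this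
      exact this
    have hker := hsmall _ hsup
    apply hgy
    have : y ∈ LinearMap.ker g := hker ▸ Submodule.mem_top
    simpa using this
  · intro hS M _ _ hM
    haveI := hM
    apply Module.Baer.injective
    intro I g
    by_cases hg : ∀ z : I, g z = 0
    · exact ⟨0, fun r mem => by simp [hg ⟨r, mem⟩]⟩
    push_neg at hg
    obtain ⟨a0, ha0⟩ := hg
    set a : R := (a0 : R) with ha
    have haI : a ∈ I := a0.2
    set K' : Ideal R := Submodule.map I.subtype (LinearMap.ker g) with hK'
    set π : R →ₗ[R] R ⧸ K' := K'.mkQ with hπ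
    have hya : π a ≠ 0 := by
      intro h
      rw [hπ] at h
      have : a ∈ K' := by simpa [Submodule.Quotient.mk_eq_zero] using h
      obtain ⟨b, hb, hba⟩ := this
      have : b = a0 := Subtype.ext (by simpa [ha] using hba)
      exact ha0 (this ▸ hb)
    -- the cyclic submodule generated by π a is not superfluous
    have hnotsup : ¬(∀ X : Submodule R (R ⧸ K'),
        LinearMap.range (LinearMap.toSpanSingleton R _ (π a)) ⊔ X = ⊤ → X = ⊤) := by
      intro hsup
      have hsmall : IsSmallModule R ↥(LinearMap.range (LinearMap.toSpanSingleton R _ (π a))) :=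
        ⟨R ⧸ K', inferInstance, inferInstance,
          (LinearMap.range (LinearMap.toSpanSingleton R _ (π a))).subtype,
          Submodule.injective_subtype _, by
            rwa [Submodule.range_subtype]⟩
      haveI := hS _ hsmall
      have h0 : (⟨π a, ⟨1, by simp [LinearMap.toSpanSingleton_apply]⟩⟩ :
          ↥(LinearMap.range (LinearMap.toSpanSingleton R _ (π a)))) = 0 :=
        Subsingleton.elim _ _
      exact hya (by simpa using congrArg Subtype.val h0)
    push_neg at hnotsup
    obtain ⟨X, hXsup, hXtop⟩ := hnotsup
    set Xt : Ideal R := Submodule.comap π X with hXt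
    have hKXt : K' ≤ Xt := by
      intro z hz
      have : π z = 0 := by simpa [hπ, Submodule.Quotient.mk_eq_zero] using hz
      simp [hXt, Submodule.mem_comap, this]
    have hπsurj : Function.Surjective π := Submodule.mkQ_surjective _
    have hXttop : Xt ≠ ⊤ := by
      intro h
      apply hXtop
      have := congrArg (Submodule.map π) h
      rw [hXt, Submodule.map_comap_eq_of_surjective hπsurj] at this
      rw [this, Submodule.map_top, LinearMap.range_eq_top.mpr hπsurj]
    have hWtop : Ideal.span {a} ⊔ Xt = ⊤ := by
      have hmap : Submodule.map π (Ideal.span {a} ⊔ Xt) = ⊤ := by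
        rw [Submodule.map_sup, Submodule.map_comap_eq_of_surjective hπsurj,
          Ideal.span, Submodule.map_span, Set.image_singleton,
          LinearMap.span_singleton_eq_range]
        exact hXsup
      have := congrArg (Submodule.comap π) hmap
      rw [Submodule.comap_map_eq, Submodule.comap_top] at this
      have hkerle : LinearMap.ker π ≤ Ideal.span {a} ⊔ Xt := by
        rw [hπ, Submodule.ker_mkQ]
        exact le_sup_of_le_right hKXt
      rwa [sup_eq_left.mpr hkerle] at this
    obtain ⟨P, hPmax, hXtP⟩ := Ideal.exists_le_maximal Xt hXttop
    have haP : a ∉ P := by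
      intro h
      apply hPmax.ne_top
      rw [← top_le_iff, ← hWtop, sup_le_iff]
      exact ⟨(Ideal.span_singleton_le_iff_mem P).mpr h, hXtP⟩
    have hK'P : K' ≤ P := hKXt.trans hXtP
    have hIP : I ⊔ P = ⊤ := by
      rw [← top_le_iff, ← hWtop, sup_le_iff]
      exact ⟨le_sup_of_le_left ((Ideal.span_singleton_le_iff_mem I).mpr haI),
        le_sup_of_le_right hXtP⟩
    -- g vanishes on I ∩ P
    have hvanish : Submodule.comap I.subtype P ≤ LinearMap.ker g := by
      rcases eq_bot_or_eq_top (Submodule.map g (Submodule.comap I.subtype P)) with h | h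
      · intro z hz
        have : g z ∈ Submodule.map g (Submodule.comap I.subtype P) := ⟨z, hz, rfl⟩
        rw [h] at this
        simpa [LinearMap.mem_ker] using this
      · exfalso
        have : g a0 ∈ Submodule.map g (Submodule.comap I.subtype P) := h ▸ Submodule.mem_top
        obtain ⟨b, hbP, hba⟩ := this
        apply haP
        have hker : a0 - b ∈ LinearMap.ker g := by
          rw [LinearMap.mem_ker, map_sub, hba, sub_self]
        have h1 : ((a0 : R) - (b : R)) ∈ K' := ⟨a0 - b, hker, rfl⟩
        have h2 : ((a0 : R) - (b : R)) ∈ P := hK'P h1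
        have : a = ((a0 : R) - (b : R)) + (b : R) := by simp [ha]
        rw [this]
        exact P.add_mem h2 hbP
    set h : I →ₗ[R] R ⧸ P := P.mkQ ∘ₗ I.subtype with hh
    have hhsurj : Function.Surjective h := by
      rw [← LinearMap.range_eq_top, hh, LinearMap.range_comp, Submodule.range_subtype]
      have := congrArg (Submodule.comap P.mkQ)
        (rfl : Submodule.map P.mkQ I = Submodule.map P.mkQ I)
      rw [← top_le_iff]
      intro z _
      obtain ⟨r, rfl⟩ := Submodule.mkQ_surjective P z
      have hr : r ∈ I ⊔ P := hIP ▸ Submodule.mem_top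
      obtain ⟨i, hi, p, hp, rfl⟩ := Submodule.mem_sup.mp hr
      refine ⟨i, hi, ?_⟩
      have : P.mkQ p = 0 := by simpa [Submodule.Quotient.mk_eq_zero] using hp
      simp [map_add, this]
    have hkerh : LinearMap.ker h ≤ LinearMap.ker g := by
      intro z hz
      apply hvanish
      rw [LinearMap.mem_ker, hh, LinearMap.comp_apply] at hz
      have : (z : R) ∈ P := by
        simpa [Submodule.Quotient.mk_eq_zero] using hz
      simpa [Submodule.mem_comap] using this
    set Φ : (I ⧸ LinearMap.ker h) →ₗ[R] M := (LinearMap.ker h).liftQ g hkerh with hΦ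
    set e : (I ⧸ LinearMap.ker h) ≃ₗ[R] (R ⧸ P) := h.quotKerEquivOfSurjective hhsurj with he
    refine ⟨Φ ∘ₗ (e.symm : (R ⧸ P) →ₗ[R] (I ⧸ LinearMap.ker h)) ∘ₗ P.mkQ, fun r mem => ?_⟩
    have h1 : P.mkQ r = h ⟨r, mem⟩ := by simp [hh]
    have h2 : e (Submodule.Quotient.mk ⟨r, mem⟩) = h ⟨r, mem⟩ := rfl
    simp only [LinearMap.comp_apply, h1, ← h2, LinearEquiv.coe_coe,
      LinearEquiv.symm_apply_apply, hΦ]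
    rw [Submodule.liftQ_apply]
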